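/- arXiv:1901.09876 — 3 statements merged into one kernel-verified Lean document; each statement's English description precedes it below -/
import Mathlib

section
/- There exists a universal constant C > 0 such that the following holds. Let E = {x₁, …, x_N} ⊂ ℝ be a finite set with x₁ < … < x_N and N ≥ 3, let f : E → [0, ∞), and let M > 0. Suppose that for every j = 1, …, N − 2 there exists a twice continuously differentiable function F_j : ℝ → ℝ with F_j ≥ 0 on ℝ, F_j(x_i) = f(x_i) for i ∈ {j, j+1, j+2}, and ‖F_j‖_{C²(ℝ)} ≤ M. Then there exists a twice continuously differentiable F : ℝ → ℝ with F ≥ 0 on ℝ, F(x) = f(x) for all x ∈ E, and ‖F‖_{C²(ℝ)} ≤ C·M. -/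
noncomputable section

/-- `C2NormLE F M` means that the `C²(ℝ)` norm
`‖F‖_{C²(ℝ)} := sup_{x ∈ ℝ} (|F(x)|² + |F′(x)|² + |F″(x)|²)^{1/2}` is at most `M`. -/
def C2NormLE (F : ℝ → ℝ) (M : ℝ) : Prop :=
  ∀ x : ℝ, Real.sqrt ((F x) ^ 2 + (deriv F x) ^ 2 + (deriv (deriv F) x) ^ 2) ≤ M

open Real Set Filter

section FPAux

lemma FP_smoothT_deriv_zero_left {s : ℝ} (hs : s < 0) : deriv Real.smoothTransition s = 0 := by
  have h : Real.smoothTransition =ᶠ[nhds s] fun _ => (0:ℝ) := by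
    filter_upwards [Iio_mem_nhds hs] with t ht
    exact Real.smoothTransition.zero_of_nonpos ht.le
  rw [h.deriv_eq, deriv_const]

lemma FP_smoothT_deriv_zero_right {s : ℝ} (hs : 1 < s) : deriv Real.smoothTransition s = 0 := by
  have h : Real.smoothTransition =ᶠ[nhds s] fun _ => (1:ℝ) := by
    filter_upwards [Ioi_mem_nhds hs] with t ht
    exact Real.smoothTransition.one_of_one_le ht.le
  rw [h.deriv_eq, deriv_const]

lemma FP_smoothT_deriv2_zero_left {s : ℝ} (hs : s < 0) :
    deriv (deriv Real.smoothTransition) s = 0 := by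
  have h : deriv Real.smoothTransition =ᶠ[nhds s] fun _ => (0:ℝ) := by
    filter_upwards [Iio_mem_nhds hs] with t ht
    exact FP_smoothT_deriv_zero_left ht
  rw [h.deriv_eq, deriv_const]

lemma FP_smoothT_deriv2_zero_right {s : ℝ} (hs : 1 < s) :
    deriv (deriv Real.smoothTransition) s = 0 := by
  have h : deriv Real.smoothTransition =ᶠ[nhds s] fun _ => (0:ℝ) := by
    filter_upwards [Ioi_mem_nhds hs] with t ht
    exact FP_smoothT_deriv_zero_right ht
  rw [h.deriv_eq, deriv_const]

lemma FP_smoothT_contDiff_deriv :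
    ContDiff ℝ ((⊤:ℕ∞) : WithTop ℕ∞) (deriv Real.smoothTransition) :=
  (contDiff_infty_iff_deriv.mp (Real.smoothTransition.contDiff (n := ⊤))).2

lemma FP_smoothT_bounds : ∃ c₁ c₂ : ℝ, 0 ≤ c₁ ∧ 0 ≤ c₂ ∧
    (∀ s, |deriv Real.smoothTransition s| ≤ c₁) ∧
    (∀ s, |deriv (deriv Real.smoothTransition) s| ≤ c₂) := by
  have hc1 : Continuous (deriv Real.smoothTransition) :=
    (FP_smoothT_contDiff_deriv).continuous
  have hc2 : Continuous (deriv (deriv Real.smoothTransition)) :=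
    (contDiff_infty_iff_deriv.mp FP_smoothT_contDiff_deriv).2.continuous
  have hs1 : HasCompactSupport (deriv Real.smoothTransition) := by
    apply HasCompactSupport.intro (isCompact_Icc (a := (0:ℝ)) (b := 1))
    intro s hs
    rcases lt_or_ge s 0 with h | h
    · exact FP_smoothT_deriv_zero_left h
    · exact FP_smoothT_deriv_zero_right (by by_contra hc; exact hs ⟨h, le_of_not_gt hc⟩)
  have hs2 : HasCompactSupport (deriv (deriv Real.smoothTransition)) := by
    apply HasCompactSupport.intro (isCompact_Icc (a := (0:ℝ)) (b := 1))
    intro s hs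
    rcases lt_or_ge s 0 with h | h
    · exact FP_smoothT_deriv2_zero_left h
    · exact FP_smoothT_deriv2_zero_right (by by_contra hc; exact hs ⟨h, le_of_not_gt hc⟩)
  obtain ⟨C1, hC1⟩ := hc1.bounded_above_of_compact_support hs1
  obtain ⟨C2, hC2⟩ := hc2.bounded_above_of_compact_support hs2
  refine ⟨max C1 0, max C2 0, le_max_right _ _, le_max_right _ _, ?_, ?_⟩
  · intro s; exact le_trans (by simpa using hC1 s) (le_max_left _ _)
  · intro s; exact le_trans (by simpa using hC2 s) (le_max_left _ _)

lemma FP_cutoff_exists : ∃ c₁ c₂ : ℝ, 0 ≤ c₁ ∧ 0 ≤ c₂ ∧ ∀ a b : ℝ, a < b →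
    ∃ ψ ψd ψdd : ℝ → ℝ,
      ContDiff ℝ 2 ψ ∧
      (∀ t, 0 ≤ ψ t) ∧ (∀ t, ψ t ≤ 1) ∧
      (∀ t, t ≤ a → ψ t = 1) ∧ (∀ t, b ≤ t → ψ t = 0) ∧
      (∀ t, HasDerivAt ψ (ψd t) t) ∧ (∀ t, HasDerivAt ψd (ψdd t) t) ∧
      (∀ t, |ψd t| ≤ c₁ / (b - a)) ∧ (∀ t, |ψdd t| ≤ c₂ / (b - a)^2) ∧
      (∀ t, t < a → ψd t = 0 ∧ ψdd t = 0) ∧ (∀ t, b < t → ψd t = 0 ∧ ψdd t = 0) := by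
  obtain ⟨c₁, c₂, hc₁, hc₂, hb₁, hb₂⟩ := FP_smoothT_bounds
  refine ⟨c₁, c₂, hc₁, hc₂, ?_⟩
  intro a b hab
  set θ := Real.smoothTransition with hθdef
  have hd : (0:ℝ) < b - a := by linarith
  set d : ℝ := b - a with hddef
  set r : ℝ → ℝ := fun t => (b - t) / d with hrdef
  have hr : ∀ t, HasDerivAt r (-1 / d) t := by
    intro t
    have h1 : HasDerivAt (fun x : ℝ => b - x) (-1) t := (hasDerivAt_id t).const_sub b
    exact h1.div_const d
  refine ⟨fun t => θ (r t), fun t => deriv θ (r t) * (-1 / d),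
    fun t => deriv (deriv θ) (r t) * (-1 / d) * (-1 / d), ?_, ?_, ?_, ?_, ?_, ?_, ?_, ?_, ?_, ?_, ?_⟩
  · exact (Real.smoothTransition.contDiff).comp
      ((contDiff_const.sub contDiff_id).div_const d)
  · intro t; exact Real.smoothTransition.nonneg _
  · intro t; exact Real.smoothTransition.le_one _
  · intro t ht
    apply Real.smoothTransition.one_of_one_le
    rw [le_div_iff₀ hd]; simp [hddef]; linarith
  · intro t ht
    apply Real.smoothTransition.zero_of_nonpos
    apply div_nonpos_of_nonpos_of_nonneg <;> linarith
  · intro t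
    have hθ : HasDerivAt θ (deriv θ (r t)) (r t) :=
      ((Real.smoothTransition.contDiff (n := 1)).differentiable (by simp) (r t)).hasDerivAt
    have := HasDerivAt.comp t hθ (hr t)
    exact this
  · intro t
    have hθ : HasDerivAt (deriv θ) (deriv (deriv θ) (r t)) (r t) :=
      (FP_smoothT_contDiff_deriv.differentiable (by simp) (r t)).hasDerivAt
    have := (HasDerivAt.comp t hθ (hr t)).mul_const (-1 / d)
    simpa [Function.comp] using this
  · intro t
    rw [abs_mul]
    have h1 : |(-1 : ℝ) / d| = 1 / d := by
      rw [abs_div]; simp [abs_of_pos hd]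
    rw [h1, div_eq_mul_one_div c₁ d]
    exact mul_le_mul_of_nonneg_right (hb₁ _) (by positivity)
  · intro t
    rw [abs_mul, abs_mul]
    have h1 : |(-1 : ℝ) / d| = 1 / d := by
      rw [abs_div]; simp [abs_of_pos hd]
    rw [h1]
    have : c₂ / d ^ 2 = c₂ * (1/d) * (1/d) := by
      field_simp
    rw [this]
    apply mul_le_mul_of_nonneg_right _ (by positivity)
    exact mul_le_mul_of_nonneg_right (hb₂ _) (by positivity)
  · intro t ht
    have hrt : 1 < r t := by
      rw [lt_div_iff₀ hd]; simp [hddef]; linarith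
    constructor
    · show deriv θ (r t) * (-1 / d) = 0
      rw [FP_smoothT_deriv_zero_right hrt]; ring
    · show deriv (deriv θ) (r t) * (-1 / d) * (-1 / d) = 0
      rw [FP_smoothT_deriv2_zero_right hrt]; ring
  · intro t ht
    have hrt : r t < 0 := by
      apply div_neg_of_neg_of_pos _ hd; linarith
    constructor
    · show deriv θ (r t) * (-1 / d) = 0
      rw [FP_smoothT_deriv_zero_left hrt]; ring
    · show deriv (deriv θ) (r t) * (-1 / d) * (-1 / d) = 0
      rw [FP_smoothT_deriv2_zero_left hrt]; ring

lemma FP_c2_components {F : ℝ → ℝ} {M : ℝ} (h : C2NormLE F M) (t : ℝ) :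
    |F t| ≤ M ∧ |deriv F t| ≤ M ∧ |deriv (deriv F) t| ≤ M := by
  have key : ∀ u v w : ℝ, |u| ≤ Real.sqrt (u^2 + v^2 + w^2) := by
    intro u v w
    rw [← Real.sqrt_sq_eq_abs]
    exact Real.sqrt_le_sqrt (by nlinarith [sq_nonneg v, sq_nonneg w])
  refine ⟨le_trans (key _ _ _) (h t), le_trans ?_ (h t), le_trans ?_ (h t)⟩
  · calc |deriv F t| ≤ Real.sqrt ((deriv F t)^2 + (F t)^2 + (deriv (deriv F) t)^2) := key _ _ _
      _ = _ := by ring_nf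
  · calc |deriv (deriv F) t| ≤ Real.sqrt ((deriv (deriv F) t)^2 + (F t)^2 + (deriv F t)^2) :=
        key _ _ _
      _ = _ := by ring_nf

lemma FP_contdiff2_diff {F : ℝ → ℝ} (h : ContDiff ℝ 2 F) :
    Differentiable ℝ F ∧ Differentiable ℝ (deriv F) := by
  have h2 : ContDiff ℝ ((1 : WithTop ℕ∞) + 1) F := by
    convert h using 2
    exact one_add_one_eq_two
  have := contDiff_succ_iff_deriv.mp h2
  exact ⟨this.1, (this.2.2.differentiable one_ne_zero)⟩

lemma FP_lip_bound {f f' : ℝ → ℝ} {K a b u v : ℝ}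
    (hd : ∀ t ∈ Set.Icc a b, HasDerivAt f (f' t) t)
    (hb : ∀ t ∈ Set.Icc a b, |f' t| ≤ K)
    (hu : u ∈ Set.Icc a b) (hv : v ∈ Set.Icc a b) :
    |f v - f u| ≤ K * |v - u| := by
  have := Convex.norm_image_sub_le_of_norm_hasDerivWithin_le
    (f := f) (f' := f') (s := Set.Icc a b) (C := K)
    (fun t ht => (hd t ht).hasDerivWithinAt)
    (fun t ht => by simpa [Real.norm_eq_abs] using hb t ht)
    (convex_Icc a b) hu hv
  simpa [Real.norm_eq_abs] using this

lemma FP_prod_bound {A Hb c' m' u : ℝ} (hu : 0 < u) (hA0 : 0 ≤ A) (hA : A ≤ c' / u)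
    (h0 : 0 ≤ Hb) (h1 : Hb ≤ m' * u) : A * Hb ≤ c' * m' := by
  calc A * Hb ≤ (c' / u) * (m' * u) := mul_le_mul hA h1 h0 (le_trans hA0 hA)
    _ = c' * m' := by field_simp

lemma FP_convex_bound {p u v K : ℝ} (h0 : 0 ≤ p) (h1 : p ≤ 1) (hu : |u| ≤ K) (hv : |v| ≤ K) :
    |p * u + (1 - p) * v| ≤ K := by
  calc |p * u + (1 - p) * v| ≤ |p * u| + |(1 - p) * v| := abs_add_le _ _
    _ = p * |u| + (1 - p) * |v| := by
        rw [abs_mul, abs_mul, abs_of_nonneg h0, abs_of_nonneg (show (0:ℝ) ≤ 1 - p by linarith)]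
    _ ≤ p * K + (1 - p) * K :=
        add_le_add (mul_le_mul_of_nonneg_left hu h0) (mul_le_mul_of_nonneg_left hv (by linarith))
    _ = K := by ring

end FPAux


set_option maxHeartbeats 1000000 in
/-- **1-D Finiteness Principle for nonnegative `C²` interpolation.**
If every three consecutive points of `E = {x 0 < x 1 < ⋯ < x (N-1)}` (with `N ≥ 3`) admit a
nonnegative `C²` interpolant of norm at most `M`, then all of `E` admits a nonnegative `C²`
interpolant of norm at most `C * M`, for a universal constant `C`. -/
theorem nonneg_C2_finiteness_principle_one_dim :
    ∃ C : ℝ, 0 < C ∧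
      ∀ (N : ℕ) (x : ℕ → ℝ) (f : ℝ → ℝ) (M : ℝ),
        3 ≤ N →
        (∀ i j : ℕ, i < j → j < N → x i < x j) →
        (∀ i : ℕ, i < N → 0 ≤ f (x i)) →
        0 < M →
        (∀ j : ℕ, j + 2 < N →
          ∃ Fj : ℝ → ℝ, ContDiff ℝ 2 Fj ∧ (∀ t : ℝ, 0 ≤ Fj t) ∧
            (Fj (x j) = f (x j) ∧ Fj (x (j + 1)) = f (x (j + 1)) ∧
              Fj (x (j + 2)) = f (x (j + 2))) ∧
            C2NormLE Fj M) →
        ∃ F : ℝ → ℝ, ContDiff ℝ 2 F ∧ (∀ t : ℝ, 0 ≤ F t) ∧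
          (∀ i : ℕ, i < N → F (x i) = f (x i)) ∧ C2NormLE F (C * M) := by
  obtain ⟨c₁, c₂, hc₁, hc₂, hcut⟩ := FP_cutoff_exists
  set B : ℝ := 3 + 8 * c₁ + 16 * c₂ with hBdef
  have hB1 : (1:ℝ) ≤ B := by simp only [hBdef]; linarith
  refine ⟨3 * B, by linarith, ?_⟩
  intro N x f M hN hx hf hM hyp
  have main : ∀ j : ℕ, j + 2 < N →
      ∃ G Fj : ℝ → ℝ,
        (∀ t, |deriv Fj t| ≤ M) ∧ (∀ t, |deriv (deriv Fj) t| ≤ M) ∧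
        (∃ y : ℝ, y < x (j+1) ∧ ∀ t, y < t → G t = Fj t) ∧
        ContDiff ℝ 2 G ∧ (∀ t, 0 ≤ G t) ∧ (∀ t, |G t| ≤ M) ∧
        (∀ t, |deriv G t| ≤ B * M) ∧ (∀ t, |deriv (deriv G) t| ≤ B * M) ∧
        (∀ i, i < j + 3 → G (x i) = f (x i)) := by
    intro j
    induction j with
    | zero =>
      intro h2
      obtain ⟨F0, hF0c, hF0nn, ⟨e0, e1, e2⟩, hF0n⟩ := hyp 0 h2
      have comp := fun t => FP_c2_components hF0n t
      have hMB : M ≤ B * M := by nlinarith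
      refine ⟨F0, F0, fun t => (comp t).2.1, fun t => (comp t).2.2,
        ⟨x 0, hx 0 1 (by omega) (by omega), fun t _ => rfl⟩,
        hF0c, hF0nn, fun t => (comp t).1,
        fun t => le_trans (comp t).2.1 hMB, fun t => le_trans (comp t).2.2 hMB, ?_⟩
      intro i hi
      interval_cases i
      · exact e0
      · exact e1
      · exact e2
    | succ j ih =>
      intro h2
      obtain ⟨G, Fj, hFjd, hFjdd, ⟨y, hy, hGFj⟩, hGc, hGnn, hGM, hGd, hGdd, hGint⟩ :=
        ih (by omega)
      obtain ⟨F', hF'c, hF'nn, ⟨e0, e1, e2⟩, hF'n⟩ := hyp (j+1) h2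
      have hi11 : j + 1 + 1 = j + 2 := by omega
      have hi12 : j + 1 + 2 = j + 3 := by omega
      rw [hi11] at e1
      rw [hi12] at e2
      have compF' := fun t => FP_c2_components hF'n t
      obtain ⟨hGdiff, hGd2⟩ := FP_contdiff2_diff hGc
      obtain ⟨hF'diff, hF'd2⟩ := FP_contdiff2_diff hF'c
      set a : ℝ := x (j+1) with hadef
      set b : ℝ := x (j+2) with hbdef
      have hab : a < b := hx (j+1) (j+2) (by omega) (by omega)
      set δ : ℝ := b - a with hδdef
      have hδ : 0 < δ := by simp only [hδdef]; linarith
      set m₁ : ℝ := a + δ/4 with hm₁def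
      set m₂ : ℝ := b - δ/4 with hm₂def
      have ham₁ : a < m₁ := by simp only [hm₁def]; linarith
      have hm₂b : m₂ < b := by simp only [hm₂def]; linarith
      have hm : m₁ < m₂ := by simp only [hm₁def, hm₂def, hδdef]; linarith
      have hmd : m₂ - m₁ = δ/2 := by simp only [hm₁def, hm₂def, hδdef]; ring
      obtain ⟨ψ, ψd, ψdd, hψc, hψ0, hψ1, hψone, hψzero, hψd, hψdd, hbd1, hbd2, hsl, hsr⟩ :=
        hcut m₁ m₂ hm
      have hya : y < a := hy
      -- scaled cutoff bounds
      have hδne : δ ≠ 0 := ne_of_gt hδ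
      have hbd1' : ∀ t, |ψd t| ≤ 2 * c₁ / δ := by
        intro t
        refine le_trans (hbd1 t) (le_of_eq ?_)
        rw [hmd]
        field_simp
      have hbd2' : ∀ t, |ψdd t| ≤ 8 * c₂ / δ^2 := by
        intro t
        refine le_trans (hbd2 t) ?_
        rw [hmd]
        have h4 : (δ/2)^2 = δ^2/4 := by ring
        rw [h4]
        rw [div_le_div_iff₀ (by positivity) (by positivity)]
        nlinarith [sq_nonneg δ, hc₂, hδ]
      -- derivatives of the glued function
      have hHder : ∀ t, HasDerivAt (fun s => G s - F' s) (deriv G t - deriv F' t) t :=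
        fun t => ((hGdiff t).hasDerivAt).sub ((hF'diff t).hasDerivAt)
      have hDHder : ∀ t, HasDerivAt (fun s => deriv G s - deriv F' s)
          (deriv (deriv G) t - deriv (deriv F') t) t :=
        fun t => ((hGd2 t).hasDerivAt).sub ((hF'd2 t).hasDerivAt)
      set Gn : ℝ → ℝ := fun t => F' t + ψ t * (G t - F' t) with hGndef
      set DGn : ℝ → ℝ := fun t =>
        deriv F' t + (ψd t * (G t - F' t) + ψ t * (deriv G t - deriv F' t)) with hDGndef
      set D2Gn : ℝ → ℝ := fun t =>
        deriv (deriv F') t + ((ψdd t * (G t - F' t) + ψd t * (deriv G t - deriv F' t)) +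
          (ψd t * (deriv G t - deriv F' t) + ψ t * (deriv (deriv G) t - deriv (deriv F') t)))
        with hD2Gndef
      have hDGn : ∀ t, HasDerivAt Gn (DGn t) t :=
        fun t => ((hF'diff t).hasDerivAt).add ((hψd t).mul (hHder t))
      have hD2 : ∀ t, HasDerivAt DGn (D2Gn t) t :=
        fun t => ((hF'd2 t).hasDerivAt).add
          (((hψdd t).mul (hHder t)).add ((hψd t).mul (hDHder t)))
      have hderivGn : deriv Gn = DGn := funext fun t => (hDGn t).deriv
      have hderiv2Gn : deriv (deriv Gn) = D2Gn := by
        rw [hderivGn]; exact funext fun t => (hD2 t).deriv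
      have hGnc : ContDiff ℝ 2 Gn := hF'c.add (hψc.mul (hGc.sub hF'c))
      -- eventual equality of derivatives of G and Fj on (y, ∞)
      have hEq1 : ∀ t, y < t → deriv G t = deriv Fj t := by
        intro t ht
        apply Filter.EventuallyEq.deriv_eq
        filter_upwards [Ioi_mem_nhds ht] with s hs
        exact hGFj s hs
      have hEq2 : ∀ t, y < t → deriv (deriv G) t = deriv (deriv Fj) t := by
        intro t ht
        apply Filter.EventuallyEq.deriv_eq
        filter_upwards [Ioi_mem_nhds ht] with s hs
        exact hEq1 s hs
      -- bounds on the difference H = G - F' on [a, b]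
      have hHa : G a - F' a = 0 := by
        rw [hGint (j+1) (by omega), e0]; ring
      have hHb : G b - F' b = 0 := by
        rw [hGint (j+2) (by omega), e1]; ring
      have hD2Hbd : ∀ t ∈ Set.Icc a b, |deriv (deriv G) t - deriv (deriv F') t| ≤ 2*M := by
        intro t ht
        rw [hEq2 t (lt_of_lt_of_le hya ht.1)]
        calc |deriv (deriv Fj) t - deriv (deriv F') t|
            ≤ |deriv (deriv Fj) t| + |deriv (deriv F') t| := abs_sub _ _
          _ ≤ M + M := add_le_add (hFjdd t) (compF' t).2.2
          _ = 2*M := by ring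
      obtain ⟨ξ, hξmem, hξ0⟩ := exists_hasDerivAt_eq_zero hab
        ((hGdiff.continuous.sub hF'diff.continuous).continuousOn)
        (by simp only [Pi.sub_apply]; rw [hHa, hHb]) (fun s _ => hHder s)
      have hDH1 : ∀ t ∈ Set.Icc a b, |deriv G t - deriv F' t| ≤ 2*M*δ := by
        intro t ht
        have hξI : ξ ∈ Set.Icc a b := ⟨hξmem.1.le, hξmem.2.le⟩
        have := FP_lip_bound (f := fun s => deriv G s - deriv F' s)
          (f' := fun s => deriv (deriv G) s - deriv (deriv F') s) (K := 2*M)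
          (fun s hs => hDHder s) hD2Hbd hξI ht
        have this2 : |(deriv G t - deriv F' t) - (deriv G ξ - deriv F' ξ)| ≤ 2*M * |t - ξ| :=
          this
        rw [hξ0, sub_zero] at this2
        calc |deriv G t - deriv F' t| ≤ 2*M * |t - ξ| := this2
          _ ≤ 2*M * δ := by
              apply mul_le_mul_of_nonneg_left _ (by linarith)
              rw [abs_le]
              constructor
              · simp only [hδdef]; linarith [ht.1, hξI.2]
              · simp only [hδdef]; linarith [ht.2, hξI.1]
      have hDH0 : ∀ t ∈ Set.Icc a b, |deriv G t - deriv F' t| ≤ 2*M := by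
        intro t ht
        rw [hEq1 t (lt_of_lt_of_le hya ht.1)]
        calc |deriv Fj t - deriv F' t| ≤ |deriv Fj t| + |deriv F' t| := abs_sub _ _
          _ ≤ M + M := add_le_add (hFjd t) (compF' t).2.1
          _ = 2*M := by ring
      have hHbd2 : ∀ t ∈ Set.Icc a b, |G t - F' t| ≤ (2*M*δ)*δ := by
        intro t ht
        have haI : a ∈ Set.Icc a b := ⟨le_refl a, hab.le⟩
        have := FP_lip_bound (f := fun s => G s - F' s)
          (f' := fun s => deriv G s - deriv F' s) (K := 2*M*δ)
          (fun s hs => hHder s) hDH1 haI ht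
        have this2 : |(G t - F' t) - (G a - F' a)| ≤ 2*M*δ * |t - a| := this
        rw [hHa, sub_zero] at this2
        calc |G t - F' t| ≤ 2*M*δ * |t - a| := this2
          _ ≤ (2*M*δ)*δ := by
              apply mul_le_mul_of_nonneg_left _ (by positivity)
              rw [abs_le]
              constructor
              · simp only [hδdef]; linarith [ht.1]
              · simp only [hδdef]; linarith [ht.2]
      have hHbd0 : ∀ t, |G t - F' t| ≤ 2*M := by
        intro t
        calc |G t - F' t| ≤ |G t| + |F' t| := abs_sub _ _
          _ ≤ M + M := add_le_add (hGM t) (compF' t).1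
          _ = 2*M := by ring
      -- inclusion of the transition zone
      have hzone : ∀ t ∈ Set.Icc m₁ m₂, t ∈ Set.Icc a b :=
        fun t ht => ⟨le_trans ham₁.le ht.1, le_trans ht.2 hm₂b.le⟩
      -- key product bounds on the transition zone
      have K1 : ∀ t ∈ Set.Icc m₁ m₂, |ψd t * (G t - F' t)| ≤ 4*c₁*M := by
        intro t ht
        rw [abs_mul]
        rcases le_or_gt δ 1 with hδ1 | hδ1
        · have := FP_prod_bound (u := δ) (c' := 2*c₁) (m' := 2*M*δ) hδ (abs_nonneg _)
            (hbd1' t) (abs_nonneg _) (hHbd2 t (hzone t ht))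
          calc |ψd t| * |G t - F' t| ≤ (2*c₁) * (2*M*δ) := this
            _ ≤ 4*c₁*M := by
                nlinarith [mul_nonneg (mul_nonneg hc₁ hM.le) (sub_nonneg.mpr hδ1)]
        · have h2M : |G t - F' t| ≤ (2*M/δ) * δ := by
            rw [div_mul_cancel₀ _ (ne_of_gt hδ)]
            exact hHbd0 t
          have := FP_prod_bound (u := δ) (c' := 2*c₁) (m' := 2*M/δ) hδ (abs_nonneg _)
            (hbd1' t) (abs_nonneg _) h2M
          calc |ψd t| * |G t - F' t| ≤ (2*c₁) * (2*M/δ) := this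
            _ ≤ 4*c₁*M := by
                have hdd : 2*M/δ ≤ 2*M := div_le_self (by linarith) hδ1.le
                nlinarith [hdd, hc₁]
      have K2 : ∀ t ∈ Set.Icc m₁ m₂, |ψdd t * (G t - F' t)| ≤ 16*c₂*M := by
        intro t ht
        rw [abs_mul]
        have hH : |G t - F' t| ≤ (2*M) * δ^2 := by
          have := hHbd2 t (hzone t ht)
          calc |G t - F' t| ≤ (2*M*δ)*δ := this
            _ = (2*M) * δ^2 := by ring
        have := FP_prod_bound (u := δ^2) (c' := 8*c₂) (m' := 2*M) (by positivity)
          (abs_nonneg _) (hbd2' t) (abs_nonneg _) hH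
        calc |ψdd t| * |G t - F' t| ≤ (8*c₂) * (2*M) := this
          _ = 16*c₂*M := by ring
      have K3 : ∀ t ∈ Set.Icc m₁ m₂, |ψd t * (deriv G t - deriv F' t)| ≤ 4*c₁*M := by
        intro t ht
        rw [abs_mul]
        have hH : |deriv G t - deriv F' t| ≤ (2*M) * δ := hDH1 t (hzone t ht)
        have := FP_prod_bound (u := δ) (c' := 2*c₁) (m' := 2*M) hδ
          (abs_nonneg _) (hbd1' t) (abs_nonneg _) hH
        calc |ψd t| * |deriv G t - deriv F' t| ≤ (2*c₁) * (2*M) := this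
          _ = 4*c₁*M := by ring
      have hMB : M ≤ B * M := by nlinarith
      -- first derivative bound
      have hDbound : ∀ t, |DGn t| ≤ B * M := by
        intro t
        by_cases ht : t ∈ Set.Icc m₁ m₂
        · have h1 : |deriv F' t| ≤ M := (compF' t).2.1
          have h2 := K1 t ht
          have h3 : |ψ t * (deriv G t - deriv F' t)| ≤ 2*M := by
            rw [abs_mul, abs_of_nonneg (hψ0 t)]
            calc ψ t * |deriv G t - deriv F' t| ≤ 1 * |deriv G t - deriv F' t| :=
                mul_le_mul_of_nonneg_right (hψ1 t) (abs_nonneg _)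
              _ = |deriv G t - deriv F' t| := one_mul _
              _ ≤ 2*M := hDH0 t (hzone t ht)
          calc |DGn t| ≤ |deriv F' t| + (|ψd t * (G t - F' t)| +
                |ψ t * (deriv G t - deriv F' t)|) := by
                refine le_trans (abs_add_le _ _) (add_le_add_right (abs_add_le _ _) _)
            _ ≤ M + (4*c₁*M + 2*M) := by linarith
            _ ≤ B * M := by
                simp only [hBdef]
                nlinarith [mul_nonneg hc₁ hM.le, mul_nonneg hc₂ hM.le]
        · have hψd0 : ψd t = 0 := by
            rcases lt_or_ge t m₁ with h | h
            · exact (hsl t h).1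
            · have h2' : m₂ < t := by
                by_contra hc
                exact ht ⟨h, le_of_not_gt hc⟩
              exact (hsr t h2').1
          have heq : DGn t = ψ t * deriv G t + (1 - ψ t) * deriv F' t := by
            simp only [hDGndef, hψd0]; ring
          rw [heq]
          exact FP_convex_bound (hψ0 t) (hψ1 t) (hGd t) (le_trans (compF' t).2.1 hMB)
      -- second derivative bound
      have hD2bound : ∀ t, |D2Gn t| ≤ B * M := by
        intro t
        by_cases ht : t ∈ Set.Icc m₁ m₂
        · have h1 : |deriv (deriv F') t| ≤ M := (compF' t).2.2
          have h2 := K2 t ht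
          have h3 := K3 t ht
          have h4 : |ψ t * (deriv (deriv G) t - deriv (deriv F') t)| ≤ 2*M := by
            rw [abs_mul, abs_of_nonneg (hψ0 t)]
            calc ψ t * |deriv (deriv G) t - deriv (deriv F') t|
                ≤ 1 * |deriv (deriv G) t - deriv (deriv F') t| :=
                  mul_le_mul_of_nonneg_right (hψ1 t) (abs_nonneg _)
              _ = |deriv (deriv G) t - deriv (deriv F') t| := one_mul _
              _ ≤ 2*M := hD2Hbd t (hzone t ht)
          calc |D2Gn t| ≤ |deriv (deriv F') t| +
                ((|ψdd t * (G t - F' t)| + |ψd t * (deriv G t - deriv F' t)|) +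
                 (|ψd t * (deriv G t - deriv F' t)| +
                  |ψ t * (deriv (deriv G) t - deriv (deriv F') t)|)) := by
                refine le_trans (abs_add_le _ _) (add_le_add_right ?_ _)
                refine le_trans (abs_add_le _ _) (add_le_add (abs_add_le _ _) (abs_add_le _ _))
            _ ≤ M + ((16*c₂*M + 4*c₁*M) + (4*c₁*M + 2*M)) := by linarith
            _ ≤ B * M := by
                simp only [hBdef]
                nlinarith [mul_nonneg hc₁ hM.le, mul_nonneg hc₂ hM.le]
        · have hψd0 : ψd t = 0 ∧ ψdd t = 0 := by
            rcases lt_or_ge t m₁ with h | h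
            · exact hsl t h
            · have h2' : m₂ < t := by
                by_contra hc
                exact ht ⟨h, le_of_not_gt hc⟩
              exact hsr t h2'
          have heq : D2Gn t = ψ t * deriv (deriv G) t + (1 - ψ t) * deriv (deriv F') t := by
            simp only [hD2Gndef, hψd0.1, hψd0.2]; ring
          rw [heq]
          exact FP_convex_bound (hψ0 t) (hψ1 t) (hGdd t) (le_trans (compF' t).2.2 hMB)
      -- assemble
      have compFj' := fun t => FP_c2_components hF'n t
      refine ⟨Gn, F', fun t => (compF' t).2.1, fun t => (compF' t).2.2,
        ⟨m₂, ?_, ?_⟩, hGnc, ?_, ?_, ?_, ?_, ?_⟩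
      · exact hm₂b
      · intro t ht
        have : ψ t = 0 := hψzero t ht.le
        simp only [hGndef, this]; ring
      · intro t
        have heq : Gn t = ψ t * G t + (1 - ψ t) * F' t := by
          simp only [hGndef]; ring
        rw [heq]
        have h1 : 0 ≤ ψ t * G t := mul_nonneg (hψ0 t) (hGnn t)
        have h2 : 0 ≤ (1 - ψ t) * F' t := mul_nonneg (by linarith [hψ1 t]) (hF'nn t)
        linarith
      · intro t
        have heq : Gn t = ψ t * G t + (1 - ψ t) * F' t := by
          simp only [hGndef]; ring
        rw [heq]
        exact FP_convex_bound (hψ0 t) (hψ1 t) (hGM t) (compF' t).1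
      · intro t; rw [hderivGn]; exact hDbound t
      · intro t; rw [hderiv2Gn]; exact hD2bound t
      · intro i hi
        rcases lt_or_ge i (j+2) with h | h
        · have hxi : x i ≤ a := by
            rcases eq_or_lt_of_le (show i ≤ j+1 by omega) with h' | h'
            · rw [h']
            · exact (hx i (j+1) h' (by omega)).le
          have hψ1' : ψ (x i) = 1 := hψone _ (le_trans hxi ham₁.le)
          have : Gn (x i) = G (x i) := by
            simp only [hGndef, hψ1']; ring
          rw [this]
          exact hGint i (by omega)
        · have hxi : m₂ ≤ x i := by
            rcases eq_or_lt_of_le (show j+2 ≤ i by omega) with h' | h'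
            · rw [← h']; exact hm₂b.le
            · exact le_trans hm₂b.le (hx (j+2) i h' (by omega)).le
          have hψ0' : ψ (x i) = 0 := hψzero _ hxi
          have : Gn (x i) = F' (x i) := by
            simp only [hGndef, hψ0']; ring
          rw [this]
          rcases eq_or_lt_of_le (show j+2 ≤ i by omega) with h' | h'
          · rw [← h']; exact e1
          · have : i = j + 3 := by omega
            rw [this]; exact e2
  obtain ⟨G, Fj, _, _, _, hGc, hGnn, hGM, hGd, hGdd, hGint⟩ := main (N - 3) (by omega)
  refine ⟨G, hGc, hGnn, ?_, ?_⟩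
  · intro i hi
    exact hGint i (by omega)
  · intro t
    have h1 := hGM t
    have h2 := hGd t
    have h3 := hGdd t
    have q1 : (G t)^2 ≤ M^2 := by
      have := mul_self_le_mul_self (abs_nonneg (G t)) h1
      nlinarith [sq_abs (G t)]
    have q2 : (deriv G t)^2 ≤ (B*M)^2 := by
      have := mul_self_le_mul_self (abs_nonneg (deriv G t)) h2
      nlinarith [sq_abs (deriv G t)]
    have q3 : (deriv (deriv G) t)^2 ≤ (B*M)^2 := by
      have := mul_self_le_mul_self (abs_nonneg (deriv (deriv G) t)) h3
      nlinarith [sq_abs (deriv (deriv G) t)]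
    have hBM : M^2 ≤ (B*M)^2 := by
      nlinarith [mul_nonneg (mul_nonneg (sub_nonneg.mpr hB1)
        (by linarith : (0:ℝ) ≤ B + 1)) (sq_nonneg M)]
    have key : (G t)^2 + (deriv G t)^2 + (deriv (deriv G) t)^2 ≤ (3*B*M)^2 := by
      nlinarith [q1, q2, q3, hBM, sq_nonneg (B*M)]
    have hBMpos : (0:ℝ) ≤ 3*B*M := by nlinarith [mul_nonneg (by linarith : (0:ℝ) ≤ B) hM.le]
    calc Real.sqrt ((G t)^2 + (deriv G t)^2 + (deriv (deriv G) t)^2)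
        ≤ Real.sqrt ((3*B*M)^2) := Real.sqrt_le_sqrt key
      _ = 3*B*M := Real.sqrt_sq hBMpos
end
end

section
/- There exists a universal constant C > 0 such that the following holds. Let E = {x₁, …, x_N} ⊂ ℝ be a finite set with x₁ < … < x_N and N ≥ 3, let f : E → ℝ, and let A₀, A₁, A₂ > 0. Suppose that for every j = 1, …, N − 2 there exists a twice continuously differentiable function F_j : ℝ → ℝ with F_j(x_i) = f(x_i) for i ∈ {j, j+1, j+2} and |∂^m F_j(x)| ≤ A_m for all x ∈ ℝ and m = 0, 1, 2. Then there exists a twice continuously differentiable F : ℝ → ℝ with F(x) = f(x) for all x ∈ E and |∂^m F(x)| ≤ C·A_m for all x ∈ ℝ and m = 0, 1, 2. -/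
noncomputable section

namespace C2FPaux

open Real Set Filter Finset Topology

abbrev ψ : ℝ → ℝ := Real.smoothTransition

lemma psi_cd : ContDiff ℝ 2 ψ := Real.smoothTransition.contDiff


lemma abs_mul_le' {a b A B : ℝ} (ha : |a| ≤ A) (hb : |b| ≤ B) (hA : 0 ≤ A) : |a*b| ≤ A*B := by
  rw [abs_mul]; exact mul_le_mul ha hb (abs_nonneg b) hA

lemma cont_zero_left {f : ℝ → ℝ} {a : ℝ} (hf : Continuous f)
    (h : ∀ s, s < a → f s = 0) : f a = 0 := by
  have h1 : Tendsto f (𝓝[<] a) (𝓝 (f a)) := (hf.continuousAt).continuousWithinAt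
  have h2 : Tendsto f (𝓝[<] a) (𝓝 0) := by
    apply Tendsto.congr' _ tendsto_const_nhds
    filter_upwards [self_mem_nhdsWithin] with s hs
    exact (h s hs).symm
  exact tendsto_nhds_unique h1 h2

lemma cont_zero_right {f : ℝ → ℝ} {a : ℝ} (hf : Continuous f)
    (h : ∀ s, a < s → f s = 0) : f a = 0 := by
  have h1 : Tendsto f (𝓝[>] a) (𝓝 (f a)) := (hf.continuousAt).continuousWithinAt
  have h2 : Tendsto f (𝓝[>] a) (𝓝 0) := by
    apply Tendsto.congr' _ tendsto_const_nhds
    filter_upwards [self_mem_nhdsWithin] with s hs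
    exact (h s hs).symm
  exact tendsto_nhds_unique h1 h2

lemma c2facts {g : ℝ → ℝ} (hg : ContDiff ℝ 2 g) :
    Differentiable ℝ g ∧ Differentiable ℝ (deriv g) ∧ Continuous (deriv (deriv g)) := by
  rw [show (2 : WithTop ℕ∞) = 1 + 1 from rfl, contDiff_succ_iff_deriv] at hg
  obtain ⟨h1, -, h3⟩ := hg
  exact ⟨h1, h3.differentiable one_ne_zero, h3.continuous_deriv le_rfl⟩

lemma psi_deriv_zero : ∀ s : ℝ, s ≤ 0 ∨ 1 ≤ s → deriv ψ s = 0 := by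
  have hcont : Continuous (deriv ψ) := (c2facts psi_cd).2.1.continuous
  have hlt : ∀ s : ℝ, s < 0 → deriv ψ s = 0 := by
    intro s hs
    have he : ψ =ᶠ[𝓝 s] fun _ => (0 : ℝ) := by
      filter_upwards [Iio_mem_nhds hs] with u hu
      exact Real.smoothTransition.zero_of_nonpos (le_of_lt hu)
    rw [he.deriv_eq, deriv_const]
  have hgt : ∀ s : ℝ, 1 < s → deriv ψ s = 0 := by
    intro s hs
    have he : ψ =ᶠ[𝓝 s] fun _ => (1 : ℝ) := by
      filter_upwards [Ioi_mem_nhds hs] with u hu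
      exact Real.smoothTransition.one_of_one_le (le_of_lt hu)
    rw [he.deriv_eq, deriv_const]
  intro s hs
  rcases hs with hs | hs
  · rcases eq_or_lt_of_le hs with rfl | hs
    · exact cont_zero_left hcont hlt
    · exact hlt s hs
  · rcases eq_or_lt_of_le hs with rfl | hs
    · exact cont_zero_right hcont hgt
    · exact hgt s hs

lemma psi_deriv2_zero : ∀ s : ℝ, s ≤ 0 ∨ 1 ≤ s → deriv (deriv ψ) s = 0 := by
  have hcont : Continuous (deriv (deriv ψ)) := (c2facts psi_cd).2.2
  have hlt : ∀ s : ℝ, s < 0 → deriv (deriv ψ) s = 0 := by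
    intro s hs
    have he : deriv ψ =ᶠ[𝓝 s] fun _ => (0 : ℝ) := by
      filter_upwards [Iio_mem_nhds hs] with u hu
      exact psi_deriv_zero u (Or.inl (le_of_lt hu))
    rw [he.deriv_eq, deriv_const]
  have hgt : ∀ s : ℝ, 1 < s → deriv (deriv ψ) s = 0 := by
    intro s hs
    have he : deriv ψ =ᶠ[𝓝 s] fun _ => (0 : ℝ) := by
      filter_upwards [Ioi_mem_nhds hs] with u hu
      exact psi_deriv_zero u (Or.inr (le_of_lt hu))
    rw [he.deriv_eq, deriv_const]
  intro s hs
  rcases hs with hs | hs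
  · rcases eq_or_lt_of_le hs with rfl | hs
    · exact cont_zero_left hcont hlt
    · exact hlt s hs
  · rcases eq_or_lt_of_le hs with rfl | hs
    · exact cont_zero_right hcont hgt
    · exact hgt s hs

lemma exists_K : ∃ K : ℝ, 1 ≤ K ∧ ∀ s : ℝ, |deriv ψ s| ≤ K ∧ |deriv (deriv ψ) s| ≤ K := by
  have hc := c2facts psi_cd
  obtain ⟨K₁, hK₁⟩ := (isCompact_Icc (a := (0:ℝ)) (b := 1)).exists_bound_of_continuousOn
    hc.2.1.continuous.continuousOn
  obtain ⟨K₂, hK₂⟩ := (isCompact_Icc (a := (0:ℝ)) (b := 1)).exists_bound_of_continuousOn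
    hc.2.2.continuousOn
  refine ⟨max 1 (max K₁ K₂), le_max_left _ _, fun s => ?_⟩
  by_cases hs : s ∈ Set.Icc (0:ℝ) 1
  · constructor
    · calc |deriv ψ s| ≤ K₁ := hK₁ s hs
        _ ≤ _ := le_trans (le_max_left _ _) (le_max_right _ _)
    · calc |deriv (deriv ψ) s| ≤ K₂ := hK₂ s hs
        _ ≤ _ := le_trans (le_max_right _ _) (le_max_right _ _)
  · have hs' : s ≤ 0 ∨ 1 ≤ s := by
      simp only [Set.mem_Icc, not_and_or, not_le] at hs
      rcases hs with h | h
      · exact Or.inl h.le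
      · exact Or.inr h.le
    rw [psi_deriv_zero s hs', psi_deriv2_zero s hs', abs_zero]
    constructor <;> positivity

lemma hasDerivAt_L (a δ t : ℝ) : HasDerivAt (fun s => (s - a) / δ) δ⁻¹ t := by
  simpa [one_div] using ((hasDerivAt_id t).sub_const a).div_const δ

lemma bump_hasDerivAt {d : ℝ → ℝ} {d' t : ℝ} (hd : HasDerivAt d d' t) (a δ : ℝ) :
    HasDerivAt (fun s => ψ ((s - a) / δ) * d s)
      (deriv ψ ((t - a) / δ) * δ⁻¹ * d t + ψ ((t - a) / δ) * d') t := by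
  have hψ : HasDerivAt ψ (deriv ψ ((t - a) / δ)) ((t - a) / δ) :=
    ((c2facts psi_cd).1 _).hasDerivAt
  exact (hψ.comp t (hasDerivAt_L a δ t)).mul hd

lemma bump2_hasDerivAt {u v : ℝ → ℝ} {u' v' t : ℝ} (hu : HasDerivAt u u' t)
    (hv : HasDerivAt v v' t) (a δ : ℝ) :
    HasDerivAt (fun s => deriv ψ ((s - a) / δ) * δ⁻¹ * u s + ψ ((s - a) / δ) * v s)
      (deriv (deriv ψ) ((t - a) / δ) * δ⁻¹ * δ⁻¹ * u t + deriv ψ ((t - a) / δ) * δ⁻¹ * u'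
        + (deriv ψ ((t - a) / δ) * δ⁻¹ * v t + ψ ((t - a) / δ) * v')) t := by
  have hψ2 : HasDerivAt (deriv ψ) (deriv (deriv ψ) ((t - a) / δ)) ((t - a) / δ) :=
    ((c2facts psi_cd).2.1 _).hasDerivAt
  have h1 : HasDerivAt (fun s => deriv ψ ((s - a) / δ) * δ⁻¹)
      (deriv (deriv ψ) ((t - a) / δ) * δ⁻¹ * δ⁻¹) t := by
    have := (hψ2.comp t (hasDerivAt_L a δ t)).mul_const δ⁻¹; exact this
  have hψ : HasDerivAt ψ (deriv ψ ((t - a) / δ)) ((t - a) / δ) :=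
    ((c2facts psi_cd).1 _).hasDerivAt
  have h2 := (hψ.comp t (hasDerivAt_L a δ t)).mul hv
  exact (h1.mul hu).add h2

lemma diff_bounds {G H : ℝ → ℝ} {a b A₁ A₂ t : ℝ} (hG : ContDiff ℝ 2 G) (hH : ContDiff ℝ 2 H)
    (hA₁ : 0 ≤ A₁) (hA₂ : 0 ≤ A₂)
    (hab : a < b) (hea : G a = H a) (heb : G b = H b)
    (hG1 : ∀ s, |deriv G s| ≤ A₁) (hH1 : ∀ s, |deriv H s| ≤ A₁)
    (hG2 : ∀ s, |deriv (deriv G) s| ≤ A₂) (hH2 : ∀ s, |deriv (deriv H) s| ≤ A₂)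
    (h1 : a ≤ t) (h2 : t ≤ b) :
    |G t - H t| ≤ 2 * A₁ * (b - a) ∧ |G t - H t| ≤ 2 * A₂ * (b - a) ^ 2 ∧
      |deriv G t - deriv H t| ≤ 2 * A₂ * (b - a) := by
  obtain ⟨hGd, hGd', -⟩ := c2facts hG
  obtain ⟨hHd, hHd', -⟩ := c2facts hH
  set d : ℝ → ℝ := fun s => G s - H s with hd_def
  have hd : ∀ s, HasDerivAt d (deriv G s - deriv H s) s := fun s =>
    (hGd s).hasDerivAt.sub (hHd s).hasDerivAt
  have hd_deriv : deriv d = fun s => deriv G s - deriv H s := funext fun s => (hd s).deriv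
  have hdd : ∀ s, HasDerivAt (deriv d) (deriv (deriv G) s - deriv (deriv H) s) s := by
    intro s
    rw [hd_deriv]
    exact (hGd' s).hasDerivAt.sub (hHd' s).hasDerivAt
  have hdd_deriv : deriv (deriv d) = fun s => deriv (deriv G) s - deriv (deriv H) s :=
    funext fun s => (hdd s).deriv
  have hda : d a = 0 := by simp [hd_def, hea]
  have hdb : d b = 0 := by simp [hd_def, heb]
  have hbd1 : ∀ s, |deriv d s| ≤ 2 * A₁ := by
    intro s
    rw [hd_deriv]
    calc |deriv G s - deriv H s| ≤ |deriv G s| + |deriv H s| := abs_sub _ _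
      _ ≤ 2 * A₁ := by linarith [hG1 s, hH1 s]
  have hbd2 : ∀ s, |deriv (deriv d) s| ≤ 2 * A₂ := by
    intro s
    rw [hdd_deriv]
    calc |deriv (deriv G) s - deriv (deriv H) s| ≤ |deriv (deriv G) s| + |deriv (deriv H) s| :=
      abs_sub _ _
      _ ≤ 2 * A₂ := by linarith [hG2 s, hH2 s]
  have claim1 : |d t| ≤ 2 * A₁ * (b - a) := by
    have := Convex.norm_image_sub_le_of_norm_deriv_le (𝕜 := ℝ) (s := Set.univ) (f := d)
      (fun s _ => ((hGd s).sub (hHd s)))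
      (fun s _ => by rw [Real.norm_eq_abs]; exact hbd1 s) convex_univ (mem_univ a) (mem_univ t)
    rw [hda, sub_zero, Real.norm_eq_abs, Real.norm_eq_abs] at this
    calc |d t| ≤ 2 * A₁ * |t - a| := this
      _ ≤ 2 * A₁ * (b - a) := by
        apply mul_le_mul_of_nonneg_left _ (by linarith)
        rw [abs_of_nonneg (by linarith)]; linarith
  obtain ⟨c, hc, hc0⟩ := exists_deriv_eq_zero hab (hGd.sub hHd).continuous.continuousOn
    (show d a = d b by rw [hda, hdb])
  have hder_bound : ∀ s, a ≤ s → s ≤ b → |deriv d s| ≤ 2 * A₂ * (b - a) := by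
    intro s hs1 hs2
    have := Convex.norm_image_sub_le_of_norm_deriv_le (𝕜 := ℝ) (s := Set.univ) (f := deriv d)
      (fun u _ => by rw [hd_deriv]; exact (hGd' u).sub (hHd' u))
      (fun u _ => by rw [Real.norm_eq_abs]; exact hbd2 u) convex_univ (mem_univ c) (mem_univ s)
    rw [show deriv d c = 0 from hc0, sub_zero, Real.norm_eq_abs, Real.norm_eq_abs] at this
    calc |deriv d s| ≤ 2 * A₂ * |s - c| := this
      _ ≤ 2 * A₂ * (b - a) := by
        apply mul_le_mul_of_nonneg_left _ (by linarith)
        rw [abs_le]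
        constructor <;> [linarith [hc.2]; linarith [hc.1]]
  have claim3 : |deriv G t - deriv H t| ≤ 2 * A₂ * (b - a) := by
    have := hder_bound t h1 h2
    rwa [hd_deriv] at this
  have claim2 : |d t| ≤ 2 * A₂ * (b - a) ^ 2 := by
    have := Convex.norm_image_sub_le_of_norm_deriv_le (𝕜 := ℝ) (s := Set.Icc a b) (f := d)
      (fun s _ => ((hGd s).sub (hHd s)))
      (fun s hs => by rw [Real.norm_eq_abs]; exact hder_bound s hs.1 hs.2)
      (convex_Icc a b) (Set.mem_Icc.2 ⟨le_refl a, hab.le⟩) (Set.mem_Icc.2 ⟨h1, h2⟩)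
    rw [hda, sub_zero, Real.norm_eq_abs, Real.norm_eq_abs] at this
    calc |d t| ≤ 2 * A₂ * (b - a) * |t - a| := this
      _ ≤ 2 * A₂ * (b - a) * (b - a) := by
        apply mul_le_mul_of_nonneg_left _ (by nlinarith)
        rw [abs_of_nonneg (by linarith)]; linarith
      _ = 2 * A₂ * (b - a) ^ 2 := by ring
  exact ⟨claim1, claim2, claim3⟩

/-- The glued interpolant. -/
def Fglue (x : ℕ → ℝ) (Fs : ℕ → ℝ → ℝ) (M : ℕ) : ℝ → ℝ := fun t =>
  Fs 0 t + ∑ j ∈ Finset.range M,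
    ψ ((t - x (j+1)) / (x (j+2) - x (j+1))) * (Fs (j+1) t - Fs j t)

/-- Formula for the first derivative of `Fglue`. -/
def Fglue1 (x : ℕ → ℝ) (Fs : ℕ → ℝ → ℝ) (M : ℕ) : ℝ → ℝ := fun t =>
  deriv (Fs 0) t + ∑ j ∈ Finset.range M,
    (deriv ψ ((t - x (j+1)) / (x (j+2) - x (j+1))) * (x (j+2) - x (j+1))⁻¹ *
        (Fs (j+1) t - Fs j t)
      + ψ ((t - x (j+1)) / (x (j+2) - x (j+1))) * (deriv (Fs (j+1)) t - deriv (Fs j) t))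

/-- Formula for the second derivative of `Fglue`. -/
def Fglue2 (x : ℕ → ℝ) (Fs : ℕ → ℝ → ℝ) (M : ℕ) : ℝ → ℝ := fun t =>
  deriv (deriv (Fs 0)) t + ∑ j ∈ Finset.range M,
    (deriv (deriv ψ) ((t - x (j+1)) / (x (j+2) - x (j+1))) * (x (j+2) - x (j+1))⁻¹ *
          (x (j+2) - x (j+1))⁻¹ * (Fs (j+1) t - Fs j t)
      + deriv ψ ((t - x (j+1)) / (x (j+2) - x (j+1))) * (x (j+2) - x (j+1))⁻¹ *
          (deriv (Fs (j+1)) t - deriv (Fs j) t)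
      + (deriv ψ ((t - x (j+1)) / (x (j+2) - x (j+1))) * (x (j+2) - x (j+1))⁻¹ *
          (deriv (Fs (j+1)) t - deriv (Fs j) t)
        + ψ ((t - x (j+1)) / (x (j+2) - x (j+1))) *
          (deriv (deriv (Fs (j+1))) t - deriv (deriv (Fs j)) t)))

lemma Fglue_contDiff {x : ℕ → ℝ} {Fs : ℕ → ℝ → ℝ} {M : ℕ}
    (hcd : ∀ j, j ≤ M → ContDiff ℝ 2 (Fs j)) : ContDiff ℝ 2 (Fglue x Fs M) := by
  apply ContDiff.add (hcd 0 (Nat.zero_le M))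
  apply ContDiff.sum
  intro j hj
  have hjM := Finset.mem_range.1 hj
  have h1 : ContDiff ℝ 2 fun s : ℝ => (s - x (j+1)) / (x (j+2) - x (j+1)) :=
    (contDiff_id.sub contDiff_const).div_const _
  exact (psi_cd.comp h1).mul ((hcd (j+1) (by omega)).sub (hcd j (by omega)))

lemma Fglue_hasDerivAt {x : ℕ → ℝ} {Fs : ℕ → ℝ → ℝ} {M : ℕ}
    (hd : ∀ j, j ≤ M → Differentiable ℝ (Fs j)) (t : ℝ) :
    HasDerivAt (Fglue x Fs M) (Fglue1 x Fs M t) t := by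
  apply HasDerivAt.add ((hd 0 (Nat.zero_le M) t).hasDerivAt)
  apply HasDerivAt.fun_sum
  intro j hj
  have hjM := Finset.mem_range.1 hj
  exact bump_hasDerivAt
    (((hd (j+1) (by omega) t).hasDerivAt).sub ((hd j (by omega) t).hasDerivAt))
    (x (j+1)) (x (j+2) - x (j+1))

lemma Fglue1_hasDerivAt {x : ℕ → ℝ} {Fs : ℕ → ℝ → ℝ} {M : ℕ}
    (hd : ∀ j, j ≤ M → Differentiable ℝ (Fs j))
    (hd' : ∀ j, j ≤ M → Differentiable ℝ (deriv (Fs j))) (t : ℝ) :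
    HasDerivAt (Fglue1 x Fs M) (Fglue2 x Fs M t) t := by
  apply HasDerivAt.add ((hd' 0 (Nat.zero_le M) t).hasDerivAt)
  apply HasDerivAt.fun_sum
  intro j hj
  have hjM := Finset.mem_range.1 hj
  exact bump2_hasDerivAt
    (((hd (j+1) (by omega) t).hasDerivAt).sub ((hd j (by omega) t).hasDerivAt))
    (((hd' (j+1) (by omega) t).hasDerivAt).sub ((hd' j (by omega) t).hasDerivAt))
    (x (j+1)) (x (j+2) - x (j+1))

end C2FPaux

open C2FPaux in
/-- **1-D Finiteness Principle for `C²` interpolation with separate derivative bounds.**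
If every three consecutive points of `E = {x 0 < x 1 < ⋯ < x (N-1)}` (with `N ≥ 3`) admit a
`C²` interpolant `F_j` with `|∂^m F_j| ≤ A m` on `ℝ` for `m = 0, 1, 2`, then all of `E`
admits a `C²` interpolant `F` with `|∂^m F| ≤ C * A m` on `ℝ` for `m = 0, 1, 2`, where `C`
is a universal constant. -/
theorem C2_finiteness_principle_one_dim_variant :
    ∃ C : ℝ, 0 < C ∧
      ∀ (N : ℕ) (x : ℕ → ℝ) (f : ℝ → ℝ) (A₀ A₁ A₂ : ℝ),
        3 ≤ N →
        (∀ i j : ℕ, i < j → j < N → x i < x j) →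
        0 < A₀ → 0 < A₁ → 0 < A₂ →
        (∀ j : ℕ, j + 2 < N →
          ∃ Fj : ℝ → ℝ, ContDiff ℝ 2 Fj ∧
            (Fj (x j) = f (x j) ∧ Fj (x (j + 1)) = f (x (j + 1)) ∧
              Fj (x (j + 2)) = f (x (j + 2))) ∧
            (∀ t : ℝ, |Fj t| ≤ A₀ ∧ |deriv Fj t| ≤ A₁ ∧ |deriv (deriv Fj) t| ≤ A₂)) →
        ∃ F : ℝ → ℝ, ContDiff ℝ 2 F ∧
          (∀ i : ℕ, i < N → F (x i) = f (x i)) ∧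
          (∀ t : ℝ, |F t| ≤ C * A₀ ∧ |deriv F t| ≤ C * A₁ ∧ |deriv (deriv F) t| ≤ C * A₂) := by
  classical
  obtain ⟨K, hK1, hK⟩ := exists_K
  refine ⟨3 + 6 * K, by linarith, ?_⟩
  intro N x f A₀ A₁ A₂ hN hx hA₀ hA₁ hA₂ hyp
  obtain ⟨M, rfl⟩ : ∃ M, N = M + 3 := ⟨N - 3, by omega⟩
  have hyp' : ∀ j : ℕ, ∃ Fj : ℝ → ℝ, j ≤ M →
      ContDiff ℝ 2 Fj ∧
        (Fj (x j) = f (x j) ∧ Fj (x (j+1)) = f (x (j+1)) ∧ Fj (x (j+2)) = f (x (j+2))) ∧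
        ∀ t, |Fj t| ≤ A₀ ∧ |deriv Fj t| ≤ A₁ ∧ |deriv (deriv Fj) t| ≤ A₂ := by
    intro j
    by_cases h : j ≤ M
    · obtain ⟨Fj, h1, h2, h3⟩ := hyp j (by omega)
      exact ⟨Fj, fun _ => ⟨h1, h2, h3⟩⟩
    · exact ⟨fun _ => 0, fun hh => absurd hh h⟩
  choose Fs hFs using hyp'
  have hcd : ∀ j, j ≤ M → ContDiff ℝ 2 (Fs j) := fun j hj => (hFs j hj).1
  have hIp : ∀ j, j ≤ M →
      Fs j (x j) = f (x j) ∧ Fs j (x (j+1)) = f (x (j+1)) ∧ Fs j (x (j+2)) = f (x (j+2)) :=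
    fun j hj => (hFs j hj).2.1
  have hB0 : ∀ j, j ≤ M → ∀ t, |Fs j t| ≤ A₀ := fun j hj t => ((hFs j hj).2.2 t).1
  have hB1 : ∀ j, j ≤ M → ∀ t, |deriv (Fs j) t| ≤ A₁ := fun j hj t => ((hFs j hj).2.2 t).2.1
  have hB2 : ∀ j, j ≤ M → ∀ t, |deriv (deriv (Fs j)) t| ≤ A₂ :=
    fun j hj t => ((hFs j hj).2.2 t).2.2
  have hdF : ∀ j, j ≤ M → Differentiable ℝ (Fs j) := fun j hj => (c2facts (hcd j hj)).1
  have hdF' : ∀ j, j ≤ M → Differentiable ℝ (deriv (Fs j)) := fun j hj => (c2facts (hcd j hj)).2.1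
  have hxle : ∀ i j : ℕ, i ≤ j → j ≤ M + 2 → x i ≤ x j := by
    intro i j hij hjM
    rcases eq_or_lt_of_le hij with rfl | h
    · exact le_refl _
    · exact (hx i j h (by omega)).le
  have hδ : ∀ j, j ≤ M → 0 < x (j+2) - x (j+1) := by
    intro j hj
    have := hx (j+1) (j+2) (by omega) (by omega)
    linarith
  -- ψ coefficient values
  have hψ0 : ∀ j, j ≤ M → ∀ t, t ≤ x (j+1) →
      ψ ((t - x (j+1)) / (x (j+2) - x (j+1))) = 0 ∧
      deriv ψ ((t - x (j+1)) / (x (j+2) - x (j+1))) = 0 ∧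
      deriv (deriv ψ) ((t - x (j+1)) / (x (j+2) - x (j+1))) = 0 := by
    intro j hj t ht
    have hδj := hδ j hj
    have hL : (t - x (j+1)) / (x (j+2) - x (j+1)) ≤ 0 := by
      rw [div_nonpos_iff]
      right
      exact ⟨by linarith, by linarith⟩
    exact ⟨Real.smoothTransition.zero_of_nonpos hL, psi_deriv_zero _ (Or.inl hL),
      psi_deriv2_zero _ (Or.inl hL)⟩
  have hψ1 : ∀ j, j ≤ M → ∀ t, x (j+2) ≤ t →
      ψ ((t - x (j+1)) / (x (j+2) - x (j+1))) = 1 ∧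
      deriv ψ ((t - x (j+1)) / (x (j+2) - x (j+1))) = 0 ∧
      deriv (deriv ψ) ((t - x (j+1)) / (x (j+2) - x (j+1))) = 0 := by
    intro j hj t ht
    have hδj := hδ j hj
    have hL : 1 ≤ (t - x (j+1)) / (x (j+2) - x (j+1)) := by
      rw [le_div_iff₀ hδj]
      linarith
    exact ⟨Real.smoothTransition.one_of_one_le hL, psi_deriv_zero _ (Or.inr hL),
      psi_deriv2_zero _ (Or.inr hL)⟩
  -- sum splitting helpers
  have split : ∀ (g e : ℕ → ℝ) (k : ℕ), k < M →
      (∀ j, k < j → j < M → g j = 0) → (∀ j, j < k → g j = e (j+1) - e j) →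
      ∑ j ∈ Finset.range M, g j = e k - e 0 + g k := by
    intro g e k hk h0 h1
    rw [← Finset.sum_range_add_sum_Ico g (Nat.succ_le_of_lt hk), Finset.sum_range_succ]
    have hz : ∑ j ∈ Finset.Ico (k+1) M, g j = 0 := by
      apply Finset.sum_eq_zero
      intro j hj
      obtain ⟨ha, hb⟩ := Finset.mem_Ico.1 hj
      exact h0 j (by omega) hb
    have ho : ∑ j ∈ Finset.range k, g j = e k - e 0 := by
      rw [Finset.sum_congr rfl (fun j hj => h1 j (Finset.mem_range.1 hj)),
        Finset.sum_range_sub (fun j => e j)]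
    rw [hz, ho]
    ring
  have tele : ∀ (g e : ℕ → ℝ), (∀ j, j < M → g j = e (j+1) - e j) →
      ∑ j ∈ Finset.range M, g j = e M - e 0 := by
    intro g e h1
    rw [Finset.sum_congr rfl (fun j hj => h1 j (Finset.mem_range.1 hj)),
      Finset.sum_range_sub (fun j => e j)]
  refine ⟨Fglue x Fs M, Fglue_contDiff hcd, ?_, ?_⟩
  · -- interpolation
    intro i hi
    set m := min (i - 1) M with hm
    have hmM : m ≤ M := min_le_right _ _
    have key : ∑ j ∈ Finset.range M,
        ψ ((x i - x (j+1)) / (x (j+2) - x (j+1))) * (Fs (j+1) (x i) - Fs j (x i))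
        = Fs m (x i) - Fs 0 (x i) := by
      rw [← Finset.sum_range_add_sum_Ico _ hmM]
      have h2 : ∑ j ∈ Finset.Ico m M,
          ψ ((x i - x (j+1)) / (x (j+2) - x (j+1))) * (Fs (j+1) (x i) - Fs j (x i)) = 0 := by
        apply Finset.sum_eq_zero
        intro j hj
        obtain ⟨hj1, hj2⟩ := Finset.mem_Ico.1 hj
        have hij : i ≤ j + 1 := by omega
        rw [(hψ0 j (by omega) (x i) (hxle i (j+1) hij (by omega))).1, zero_mul]
      have h1 : ∑ j ∈ Finset.range m,
          ψ ((x i - x (j+1)) / (x (j+2) - x (j+1))) * (Fs (j+1) (x i) - Fs j (x i))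
          = Fs m (x i) - Fs 0 (x i) := by
        rw [Finset.sum_congr rfl (fun j hj => ?_), Finset.sum_range_sub (fun j => Fs j (x i))]
        have hjm := Finset.mem_range.1 hj
        have hij : j + 2 ≤ i := by omega
        rw [(hψ1 j (by omega) (x i) (hxle (j+2) i hij (by omega))).1, one_mul]
      rw [h1, h2, add_zero]
    have : Fglue x Fs M (x i) = Fs m (x i) := by
      simp only [Fglue]; rw [key]; ring
    rw [this]
    have him : i = m ∨ i = m + 1 ∨ i = m + 2 := by omega
    obtain ⟨hI1, hI2, hI3⟩ := hIp m hmM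
    rcases him with h | h | h
    · rw [h]; exact hI1
    · rw [h]; exact hI2
    · rw [h]; exact hI3
  · -- bounds
    have hder1 : deriv (Fglue x Fs M) = Fglue1 x Fs M :=
      funext fun t => (Fglue_hasDerivAt hdF t).deriv
    have hder2 : deriv (deriv (Fglue x Fs M)) = Fglue2 x Fs M := by
      rw [hder1]
      exact funext fun t => (Fglue1_hasDerivAt hdF hdF' t).deriv
    intro t
    rw [hder2, hder1]
    have hKpos : (0:ℝ) < K := by linarith
    -- case analysis
    by_cases hc1 : t ≤ x 1
    · -- left region : F = Fs 0 near-sum vanishes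
      have hz : ∀ j, j < M → ψ ((t - x (j+1)) / (x (j+2) - x (j+1))) = 0 ∧
          deriv ψ ((t - x (j+1)) / (x (j+2) - x (j+1))) = 0 ∧
          deriv (deriv ψ) ((t - x (j+1)) / (x (j+2) - x (j+1))) = 0 :=
        fun j hj => hψ0 j (by omega) t (le_trans hc1 (hxle 1 (j+1) (by omega) (by omega)))
      have e0 : Fglue x Fs M t = Fs 0 t := by
        simp only [Fglue]
        rw [Finset.sum_eq_zero (fun j hj => by
          rw [(hz j (Finset.mem_range.1 hj)).1, zero_mul])]
        ring
      have e1 : Fglue1 x Fs M t = deriv (Fs 0) t := by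
        simp only [Fglue1]
        rw [Finset.sum_eq_zero (fun j hj => by
          obtain ⟨z1, z2, z3⟩ := hz j (Finset.mem_range.1 hj)
          rw [z1, z2]; ring)]
        ring
      have e2 : Fglue2 x Fs M t = deriv (deriv (Fs 0)) t := by
        simp only [Fglue2]
        rw [Finset.sum_eq_zero (fun j hj => by
          obtain ⟨z1, z2, z3⟩ := hz j (Finset.mem_range.1 hj)
          rw [z1, z2, z3]; ring)]
        ring
      rw [e0, e1, e2]
      refine ⟨le_trans (hB0 0 (Nat.zero_le M) t) ?_, le_trans (hB1 0 (Nat.zero_le M) t) ?_,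
        le_trans (hB2 0 (Nat.zero_le M) t) ?_⟩ <;> nlinarith
    · by_cases hc2 : x (M+1) ≤ t
      · -- right region
        have hz : ∀ j, j < M → ψ ((t - x (j+1)) / (x (j+2) - x (j+1))) = 1 ∧
            deriv ψ ((t - x (j+1)) / (x (j+2) - x (j+1))) = 0 ∧
            deriv (deriv ψ) ((t - x (j+1)) / (x (j+2) - x (j+1))) = 0 :=
          fun j hj => hψ1 j (by omega) t (le_trans (hxle (j+2) (M+1) (by omega) (by omega)) hc2)
        have e0 : Fglue x Fs M t = Fs M t := by
          simp only [Fglue]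
          rw [tele _ (fun j => Fs j t) (fun j hj => by
            rw [(hz j hj).1, one_mul])]
          ring
        have e1 : Fglue1 x Fs M t = deriv (Fs M) t := by
          simp only [Fglue1]
          rw [tele _ (fun j => deriv (Fs j) t) (fun j hj => by
            obtain ⟨z1, z2, z3⟩ := hz j hj
            rw [z1, z2]; ring)]
          ring
        have e2 : Fglue2 x Fs M t = deriv (deriv (Fs M)) t := by
          simp only [Fglue2]
          rw [tele _ (fun j => deriv (deriv (Fs j)) t) (fun j hj => by
            obtain ⟨z1, z2, z3⟩ := hz j hj
            rw [z1, z2, z3]; ring)]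
          ring
        rw [e0, e1, e2]
        refine ⟨le_trans (hB0 M le_rfl t) ?_, le_trans (hB1 M le_rfl t) ?_,
          le_trans (hB2 M le_rfl t) ?_⟩ <;> nlinarith
      · -- middle region
        push_neg at hc1 hc2
        have hM0 : 0 < M := by
          by_contra h
          have : M = 0 := by omega
          subst this
          linarith
        set P : ℕ → Prop := fun j => x (j+1) ≤ t ∧ j < M with hP
        have hP0 : P 0 := ⟨hc1.le, hM0⟩
        set k := Nat.findGreatest P M with hkdef
        have hPk : P k := Nat.findGreatest_spec (Nat.zero_le M) hP0
        obtain ⟨hk1, hkM⟩ := hPk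
        have hk2 : t ≤ x (k+2) := by
          by_cases hkM' : k + 1 < M
          · have hnot : ¬ P (k+1) :=
              Nat.findGreatest_is_greatest (n := M) (P := P) (by omega) (by omega)
            by_contra hcon
            push_neg at hcon
            exact hnot ⟨hcon.le, hkM'⟩
          · have heq : x (k+2) = x (M+1) := by rw [show k + 2 = M + 1 by omega]
            rw [heq]
            exact hc2.le
        -- difference bounds on the active interval
        have hkM1 : k + 1 ≤ M := by omega
        have hkM0 : k ≤ M := by omega
        have hδk := hδ k hkM0
        have hne : x (k+2) - x (k+1) ≠ 0 := ne_of_gt hδk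
        obtain ⟨hd1, hd2, hd3⟩ := diff_bounds (hcd (k+1) hkM1) (hcd k hkM0)
          hA₁.le hA₂.le (show x (k+1) < x (k+2) by linarith)
          (by rw [(hIp k hkM0).2.1]; exact (hIp (k+1) hkM1).1)
          (by rw [(hIp k hkM0).2.2]; exact (hIp (k+1) hkM1).2.1)
          (hB1 (k+1) hkM1) (hB1 k hkM0) (hB2 (k+1) hkM1) (hB2 k hkM0) hk1 hk2
        -- coefficient values away from the active interval
        have hcoef0 : ∀ j, k < j → j < M →
            ψ ((t - x (j+1)) / (x (j+2) - x (j+1))) = 0 ∧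
            deriv ψ ((t - x (j+1)) / (x (j+2) - x (j+1))) = 0 ∧
            deriv (deriv ψ) ((t - x (j+1)) / (x (j+2) - x (j+1))) = 0 :=
          fun j h1 h2 => hψ0 j (by omega) t
            (le_trans hk2 (hxle (k+2) (j+1) (by omega) (by omega)))
        have hcoef1 : ∀ j, j < k →
            ψ ((t - x (j+1)) / (x (j+2) - x (j+1))) = 1 ∧
            deriv ψ ((t - x (j+1)) / (x (j+2) - x (j+1))) = 0 ∧
            deriv (deriv ψ) ((t - x (j+1)) / (x (j+2) - x (j+1))) = 0 :=
          fun j h1 => hψ1 j (by omega) t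
            (le_trans (hxle (j+2) (k+1) (by omega) (by omega)) hk1)
        have hψabs : |ψ ((t - x (k+1)) / (x (k+2) - x (k+1)))| ≤ 1 := by
          rw [abs_of_nonneg (Real.smoothTransition.nonneg _)]
          exact Real.smoothTransition.le_one _
        have hinv : |(x (k+2) - x (k+1))⁻¹| ≤ (x (k+2) - x (k+1))⁻¹ :=
          le_of_eq (abs_of_pos (inv_pos.2 hδk))
        have hinvpos : (0:ℝ) ≤ (x (k+2) - x (k+1))⁻¹ := (inv_pos.2 hδk).le
        have hK0 : (0:ℝ) ≤ K := by linarith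
        -- value bound
        have e0 : Fglue x Fs M t = Fs k t +
            ψ ((t - x (k+1)) / (x (k+2) - x (k+1))) * (Fs (k+1) t - Fs k t) := by
          simp only [Fglue]
          rw [split _ (fun j => Fs j t) k hkM
            (fun j h1 h2 => by rw [(hcoef0 j h1 h2).1, zero_mul])
            (fun j h1 => by rw [(hcoef1 j h1).1, one_mul])]
          ring
        have e1 : Fglue1 x Fs M t = deriv (Fs k) t +
            (deriv ψ ((t - x (k+1)) / (x (k+2) - x (k+1))) * (x (k+2) - x (k+1))⁻¹ *
              (Fs (k+1) t - Fs k t)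
            + ψ ((t - x (k+1)) / (x (k+2) - x (k+1))) *
              (deriv (Fs (k+1)) t - deriv (Fs k) t)) := by
          simp only [Fglue1]
          rw [split _ (fun j => deriv (Fs j) t) k hkM
            (fun j h1 h2 => by
              obtain ⟨z1, z2, z3⟩ := hcoef0 j h1 h2
              rw [z1, z2]; ring)
            (fun j h1 => by
              obtain ⟨z1, z2, z3⟩ := hcoef1 j h1
              rw [z1, z2]; ring)]
          ring
        have e2 : Fglue2 x Fs M t = deriv (deriv (Fs k)) t +
            (deriv (deriv ψ) ((t - x (k+1)) / (x (k+2) - x (k+1))) * (x (k+2) - x (k+1))⁻¹ *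
                (x (k+2) - x (k+1))⁻¹ * (Fs (k+1) t - Fs k t)
              + deriv ψ ((t - x (k+1)) / (x (k+2) - x (k+1))) * (x (k+2) - x (k+1))⁻¹ *
                (deriv (Fs (k+1)) t - deriv (Fs k) t)
              + (deriv ψ ((t - x (k+1)) / (x (k+2) - x (k+1))) * (x (k+2) - x (k+1))⁻¹ *
                (deriv (Fs (k+1)) t - deriv (Fs k) t)
                + ψ ((t - x (k+1)) / (x (k+2) - x (k+1))) *
                  (deriv (deriv (Fs (k+1))) t - deriv (deriv (Fs k)) t))) := by
          simp only [Fglue2]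
          rw [split _ (fun j => deriv (deriv (Fs j)) t) k hkM
            (fun j h1 h2 => by
              obtain ⟨z1, z2, z3⟩ := hcoef0 j h1 h2
              rw [z1, z2, z3]; ring)
            (fun j h1 => by
              obtain ⟨z1, z2, z3⟩ := hcoef1 j h1
              rw [z1, z2, z3]; ring)]
          ring
        set q : ℝ := ψ ((t - x (k+1)) / (x (k+2) - x (k+1))) with hq_def
        set q1 : ℝ := deriv ψ ((t - x (k+1)) / (x (k+2) - x (k+1))) with hq1_def
        set q2 : ℝ := deriv (deriv ψ) ((t - x (k+1)) / (x (k+2) - x (k+1))) with hq2_def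
        set u0 : ℝ := Fs (k+1) t - Fs k t with hu0_def
        set u1 : ℝ := deriv (Fs (k+1)) t - deriv (Fs k) t with hu1_def
        set u2 : ℝ := deriv (deriv (Fs (k+1))) t - deriv (deriv (Fs k)) t with hu2_def
        set δ : ℝ := x (k+2) - x (k+1) with hδ_def
        have hqK1 : |q1| ≤ K := (hK _).1
        have hqK2 : |q2| ≤ K := (hK _).2
        have hu1g : |u1| ≤ 2 * A₁ := by
          rw [hu1_def]
          calc |deriv (Fs (k+1)) t - deriv (Fs k) t|
              ≤ |deriv (Fs (k+1)) t| + |deriv (Fs k) t| := abs_sub _ _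
            _ ≤ 2 * A₁ := by linarith [hB1 (k+1) hkM1 t, hB1 k hkM0 t]
        have hu2g : |u2| ≤ 2 * A₂ := by
          rw [hu2_def]
          calc |deriv (deriv (Fs (k+1))) t - deriv (deriv (Fs k)) t|
              ≤ |deriv (deriv (Fs (k+1))) t| + |deriv (deriv (Fs k)) t| := abs_sub _ _
            _ ≤ 2 * A₂ := by linarith [hB2 (k+1) hkM1 t, hB2 k hkM0 t]
        have hu0g : |u0| ≤ 2 * A₀ := by
          rw [hu0_def]
          calc |Fs (k+1) t - Fs k t| ≤ |Fs (k+1) t| + |Fs k t| := abs_sub _ _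
            _ ≤ 2 * A₀ := by linarith [hB0 (k+1) hkM1 t, hB0 k hkM0 t]
        refine ⟨?_, ?_, ?_⟩
        · rw [e0]
          have h2 : |q * u0| ≤ 1 * (2 * A₀) := abs_mul_le' hψabs hu0g zero_le_one
          calc |Fs k t + q * u0| ≤ |Fs k t| + |q * u0| := abs_add_le _ _
            _ ≤ (3 + 6 * K) * A₀ := by
                have hKA : 0 ≤ K * A₀ := mul_nonneg hK0 hA₀.le
                have hb := hB0 k hkM0 t
                linarith
        · rw [e1]
          have hX : |q1 * δ⁻¹ * u0| ≤ K * δ⁻¹ * (2 * A₁ * δ) :=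
            abs_mul_le' (abs_mul_le' hqK1 hinv hK0) hd1 (mul_nonneg hK0 hinvpos)
          have hXeq : K * δ⁻¹ * (2 * A₁ * δ) = 2 * K * A₁ := by
            field_simp
          rw [hXeq] at hX
          have hY : |q * u1| ≤ 1 * (2 * A₁) := abs_mul_le' hψabs hu1g zero_le_one
          calc |deriv (Fs k) t + (q1 * δ⁻¹ * u0 + q * u1)|
              ≤ |deriv (Fs k) t| + |q1 * δ⁻¹ * u0 + q * u1| := abs_add_le _ _
            _ ≤ |deriv (Fs k) t| + (|q1 * δ⁻¹ * u0| + |q * u1|) := by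
                gcongr
                exact abs_add_le _ _
            _ ≤ (3 + 6 * K) * A₁ := by
                have hKA : 0 ≤ K * A₁ := mul_nonneg hK0 hA₁.le
                have hb := hB1 k hkM0 t
                linarith
        · rw [e2]
          have hT1 : |q2 * δ⁻¹ * δ⁻¹ * u0| ≤ K * δ⁻¹ * δ⁻¹ * (2 * A₂ * δ ^ 2) :=
            abs_mul_le' (abs_mul_le' (abs_mul_le' hqK2 hinv hK0) hinv
              (mul_nonneg hK0 hinvpos)) hd2 (mul_nonneg (mul_nonneg hK0 hinvpos) hinvpos)
          have hT1eq : K * δ⁻¹ * δ⁻¹ * (2 * A₂ * δ ^ 2) = 2 * K * A₂ := by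
            field_simp
          rw [hT1eq] at hT1
          have hT2 : |q1 * δ⁻¹ * u1| ≤ K * δ⁻¹ * (2 * A₂ * δ) :=
            abs_mul_le' (abs_mul_le' hqK1 hinv hK0) hd3 (mul_nonneg hK0 hinvpos)
          have hT2eq : K * δ⁻¹ * (2 * A₂ * δ) = 2 * K * A₂ := by
            field_simp
          rw [hT2eq] at hT2
          have hT3 : |q * u2| ≤ 1 * (2 * A₂) := abs_mul_le' hψabs hu2g zero_le_one
          calc |deriv (deriv (Fs k)) t +
                (q2 * δ⁻¹ * δ⁻¹ * u0 + q1 * δ⁻¹ * u1 + (q1 * δ⁻¹ * u1 + q * u2))|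
              ≤ |deriv (deriv (Fs k)) t| +
                |q2 * δ⁻¹ * δ⁻¹ * u0 + q1 * δ⁻¹ * u1 + (q1 * δ⁻¹ * u1 + q * u2)| := abs_add_le _ _
            _ ≤ |deriv (deriv (Fs k)) t| +
                (|q2 * δ⁻¹ * δ⁻¹ * u0 + q1 * δ⁻¹ * u1| + |q1 * δ⁻¹ * u1 + q * u2|) := by
                gcongr
                exact abs_add_le _ _
            _ ≤ |deriv (deriv (Fs k)) t| +
                (|q2 * δ⁻¹ * δ⁻¹ * u0| + |q1 * δ⁻¹ * u1| + (|q1 * δ⁻¹ * u1| + |q * u2|)) := by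
                gcongr <;> exact abs_add_le _ _
            _ ≤ (3 + 6 * K) * A₂ := by
                have hKA : 0 ≤ K * A₂ := mul_nonneg hK0 hA₂.le
                have hb := hB2 k hkM0 t
                linarith
end
end

section
/- For every constant C > 0 there exists a finite set E ⊂ ℝ (one may take E = {0, ε, 2ε} for sufficiently small ε > 0 depending on C) such that there is no map ℰ : C²₊(E) → C²(ℝ) satisfying both of the following: (A) for all f ∈ C²₊(E), ℰ(f)(x) = f(x) for all x ∈ E, ℰ(f) ≥ 0 on ℝ, and ‖ℰ(f)‖_{C²(ℝ)} ≤ C·‖f‖_{C²₊(E)}; (B) ℰ(f + g) = ℰ(f) + ℰ(g) for all f, g ∈ C²₊(E). -/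
noncomputable section

/-- The nonnegative trace norm `‖f‖_{C²₊(E)}`:
the infimum of `‖F‖_{C²(ℝ)}` over all nonnegative `C²` extensions `F` of `f|_E`. -/
noncomputable def traceNormPlus (E : Finset ℝ) (f : ℝ → ℝ) : ℝ :=
  sInf {M : ℝ | ∃ F : ℝ → ℝ, ContDiff ℝ 2 F ∧ (∀ t : ℝ, 0 ≤ F t) ∧
    (∀ x ∈ E, F x = f x) ∧ C2NormLE F M}

/- ### Auxiliary lemmas -/

lemma my_diff_deriv {F : ℝ → ℝ} (h : ContDiff ℝ 2 F) : Differentiable ℝ (deriv F) := by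
  have h2 : ContDiff ℝ ((1:WithTop ℕ∞)+1) F := by norm_num; exact h
  exact ((contDiff_succ_iff_deriv.mp h2).2.2).differentiable one_ne_zero

lemma my_dd_bound {F : ℝ → ℝ} {M : ℝ} (h : C2NormLE F M) (x : ℝ) :
    |deriv (deriv F) x| ≤ M := by
  have h1 := h x
  have h2 : |deriv (deriv F) x| = Real.sqrt ((deriv (deriv F) x) ^ 2) := by
    rw [Real.sqrt_sq_eq_abs]
  rw [h2]
  refine le_trans (Real.sqrt_le_sqrt ?_) h1
  nlinarith [sq_nonneg (F x), sq_nonneg (deriv F x)]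

/-- A nonnegative `C²` function vanishing at `0` has a large second derivative somewhere. -/
lemma my_exists_big_dd {R : ℝ → ℝ} {ε : ℝ} (hε : 0 < ε) (h2 : ContDiff ℝ 2 R)
    (hnn : ∀ t : ℝ, 0 ≤ R t) (h0 : R 0 = 0) :
    ∃ x : ℝ, R ε / ε ^ 2 ≤ deriv (deriv R) x := by
  have hdiff : Differentiable ℝ R := h2.differentiable (by norm_num)
  have hd2 : Differentiable ℝ (deriv R) := my_diff_deriv h2
  have hd0 : deriv R 0 = 0 := by
    have hmin : IsLocalMin R 0 := Filter.Eventually.of_forall (fun x => by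
      rw [h0]; exact hnn x)
    exact hmin.deriv_eq_zero
  obtain ⟨c, hc, hc'⟩ := exists_deriv_eq_slope R hε (hdiff.continuous.continuousOn)
    (hdiff.differentiableOn)
  obtain ⟨d, _, hd'⟩ := exists_deriv_eq_slope (deriv R) hc.1 (hd2.continuous.continuousOn)
    (hd2.differentiableOn)
  refine ⟨d, ?_⟩
  rw [hd', hd0, hc', h0, sub_zero, sub_zero, sub_zero, sub_zero, div_div]
  have hc0 : 0 < c := hc.1
  have hcε : c ≤ ε := le_of_lt hc.2
  have hR : 0 ≤ R ε := hnn ε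
  rw [div_le_div_iff₀ (by positivity) (by positivity)]
  have hec : ε * c ≤ ε ^ 2 := by nlinarith
  nlinarith [mul_le_mul_of_nonneg_left hec hR]

/-- The trace norm of the data of `1 + sin` is at most `3`. -/
lemma my_trace_plus (E : Finset ℝ) : traceNormPlus E (fun x => 1 + Real.sin x) ≤ 3 := by
  apply csInf_le
  · exact ⟨0, fun M hM => by
      obtain ⟨F, _, _, _, h4⟩ := hM
      exact le_trans (Real.sqrt_nonneg _) (h4 0)⟩
  · refine ⟨fun x => 1 + Real.sin x, ?_, ?_, fun x _ => rfl, ?_⟩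
    · exact contDiff_const.add (Real.contDiff_sin.of_le le_top)
    · intro t; have := Real.neg_one_le_sin t; show (0:ℝ) ≤ 1 + Real.sin t; linarith
    · intro x
      have hd1 : deriv (fun x : ℝ => 1 + Real.sin x) = Real.cos := by
        funext y; rw [deriv_const_add, Real.deriv_sin]
      rw [hd1, Real.deriv_cos]
      show Real.sqrt ((1 + Real.sin x) ^ 2 + Real.cos x ^ 2 + (-Real.sin x) ^ 2) ≤ 3
      have h9 : (1 + Real.sin x) ^ 2 + Real.cos x ^ 2 + (-Real.sin x) ^ 2 ≤ 9 := by
        nlinarith [Real.neg_one_le_sin x, Real.sin_le_one x, Real.neg_one_le_cos x,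
          Real.cos_le_one x]
      calc Real.sqrt ((1 + Real.sin x) ^ 2 + Real.cos x ^ 2 + (-Real.sin x) ^ 2)
          ≤ Real.sqrt 9 := Real.sqrt_le_sqrt h9
        _ = 3 := by
            rw [show (9:ℝ) = 3 ^ 2 by norm_num, Real.sqrt_sq (by norm_num : (0:ℝ) ≤ 3)]

/-- The trace norm of the data of `1 - sin` is at most `3`. -/
lemma my_trace_minus (E : Finset ℝ) : traceNormPlus E (fun x => 1 - Real.sin x) ≤ 3 := by
  apply csInf_le
  · exact ⟨0, fun M hM => by
      obtain ⟨F, _, _, _, h4⟩ := hM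
      exact le_trans (Real.sqrt_nonneg _) (h4 0)⟩
  · refine ⟨fun x => 1 - Real.sin x, ?_, ?_, fun x _ => rfl, ?_⟩
    · exact contDiff_const.sub (Real.contDiff_sin.of_le le_top)
    · intro t; have := Real.sin_le_one t; show (0:ℝ) ≤ 1 - Real.sin t; linarith
    · intro x
      have hd1 : deriv (fun x : ℝ => 1 - Real.sin x) = fun y => -Real.cos y := by
        funext y; rw [deriv_const_sub, Real.deriv_sin]
      have hd2 : deriv (fun y : ℝ => -Real.cos y) x = Real.sin x := by
        rw [deriv.fun_neg, Real.deriv_cos]; ring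
      rw [hd1, hd2]
      show Real.sqrt ((1 - Real.sin x) ^ 2 + (-Real.cos x) ^ 2 + (Real.sin x) ^ 2) ≤ 3
      have h9 : (1 - Real.sin x) ^ 2 + (-Real.cos x) ^ 2 + (Real.sin x) ^ 2 ≤ 9 := by
        nlinarith [Real.neg_one_le_sin x, Real.sin_le_one x, Real.neg_one_le_cos x,
          Real.cos_le_one x]
      calc Real.sqrt ((1 - Real.sin x) ^ 2 + (-Real.cos x) ^ 2 + (Real.sin x) ^ 2)
          ≤ Real.sqrt 9 := Real.sqrt_le_sqrt h9
        _ = 3 := by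
            rw [show (9:ℝ) = 3 ^ 2 by norm_num, Real.sqrt_sq (by norm_num : (0:ℝ) ≤ 3)]

set_option maxHeartbeats 1000000 in
/-- **Nonexistence of a bounded additive nonnegativity-preserving extension operator.**
For every `C > 0` there is a finite set `E ⊆ ℝ` such that no map `Ext` on nonnegative data
`f : E → [0, ∞)` can simultaneously be a `C`-bounded nonnegative `C²` extension operator
and be additive. -/
theorem no_additive_nonneg_C2_extension_operator :
    ∀ C : ℝ, 0 < C → ∃ E : Finset ℝ,
      ¬ ∃ Ext : (ℝ → ℝ) → ℝ → ℝ,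
        (∀ f : ℝ → ℝ, (∀ x ∈ E, 0 ≤ f x) →
          (∀ x ∈ E, Ext f x = f x) ∧ (∀ t : ℝ, 0 ≤ Ext f t) ∧
          ContDiff ℝ 2 (Ext f) ∧ C2NormLE (Ext f) (C * traceNormPlus E f)) ∧
        (∀ f g : ℝ → ℝ, (∀ x ∈ E, 0 ≤ f x) → (∀ x ∈ E, 0 ≤ g x) →
          Ext (f + g) = Ext f + Ext g) := by
  intro C hC
  set ε : ℝ := min 1 (1 / (12 * C)) with hεdef
  have hε : 0 < ε := lt_min one_pos (by positivity)
  have hε1 : ε ≤ 1 := min_le_left _ _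
  have hεC : ε ≤ 1 / (12 * C) := min_le_right _ _
  refine ⟨{0, ε}, ?_⟩
  rintro ⟨Ext, hA, hB⟩
  set fr : ℝ → ℝ := Real.sin with hfrdef
  set f1 : ℝ → ℝ := fun _ => (1 : ℝ) with hf1def
  set fm : ℝ → ℝ := fun x => 1 - Real.sin x with hfmdef
  set fp : ℝ → ℝ := fun x => 1 + Real.sin x with hfpdef
  have hmemε : ε ∈ ({0, ε} : Finset ℝ) := by simp
  have hmem0 : (0:ℝ) ∈ ({0, ε} : Finset ℝ) := by simp
  have hεπ : ε ≤ Real.pi := le_trans hε1 (by linarith [Real.pi_gt_three])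
  have hfr_nn : ∀ x ∈ ({0, ε} : Finset ℝ), 0 ≤ fr x := by
    intro x hx
    simp only [Finset.mem_insert, Finset.mem_singleton] at hx
    rcases hx with h | h <;> subst h
    · simp [hfrdef]
    · exact Real.sin_nonneg_of_nonneg_of_le_pi (le_of_lt hε) hεπ
  have hfm_nn : ∀ x ∈ ({0, ε} : Finset ℝ), 0 ≤ fm x := by
    intro x _
    have := Real.sin_le_one x
    simp only [hfmdef]; linarith
  have hfp_nn : ∀ x ∈ ({0, ε} : Finset ℝ), 0 ≤ fp x := by
    intro x _
    have := Real.neg_one_le_sin x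
    simp only [hfpdef]; linarith
  have hf1_nn : ∀ x ∈ ({0, ε} : Finset ℝ), 0 ≤ f1 x := by
    intro x _; simp [hf1def]
  -- additivity
  have e1 : Ext (fm + fr) = Ext fm + Ext fr := hB fm fr hfm_nn hfr_nn
  have hmf : fm + fr = f1 := by
    funext x; show (1 - Real.sin x) + Real.sin x = 1; ring
  rw [hmf] at e1
  have e2 : Ext (f1 + fr) = Ext f1 + Ext fr := hB f1 fr hf1_nn hfr_nn
  have hpf : f1 + fr = fp := by
    funext x; show (1 : ℝ) + Real.sin x = 1 + Real.sin x; rfl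
  rw [hpf, e1] at e2
  have hpt : ∀ x, Ext fp x = Ext fm x + Ext fr x + Ext fr x := by
    intro x; rw [e2]; rfl
  -- properties from (A)
  obtain ⟨hR_int, hR_nn, hR_C2, -⟩ := hA fr hfr_nn
  obtain ⟨-, -, hP_C2, hP_bd⟩ := hA fp hfp_nn
  obtain ⟨-, -, hM_C2, hM_bd⟩ := hA fm hfm_nn
  -- second-derivative bounds on Ext fp and Ext fm
  have hP_bd3 : ∀ x, |deriv (deriv (Ext fp)) x| ≤ 3 * C := by
    intro x
    have h1 := my_dd_bound hP_bd x
    have h2 : C * traceNormPlus {0, ε} fp ≤ C * 3 :=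
      mul_le_mul_of_nonneg_left (my_trace_plus _) (le_of_lt hC)
    calc |deriv (deriv (Ext fp)) x| ≤ C * traceNormPlus {0, ε} fp := h1
      _ ≤ C * 3 := h2
      _ = 3 * C := by ring
  have hM_bd3 : ∀ x, |deriv (deriv (Ext fm)) x| ≤ 3 * C := by
    intro x
    have h1 := my_dd_bound hM_bd x
    have h2 : C * traceNormPlus {0, ε} fm ≤ C * 3 :=
      mul_le_mul_of_nonneg_left (my_trace_minus _) (le_of_lt hC)
    calc |deriv (deriv (Ext fm)) x| ≤ C * traceNormPlus {0, ε} fm := h1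
      _ ≤ C * 3 := h2
      _ = 3 * C := by ring
  -- the function R := Ext fr
  have hR0 : Ext fr 0 = 0 := by
    have := hR_int 0 hmem0
    simpa [hfrdef] using this
  have hRε : Ext fr ε = Real.sin ε := hR_int ε hmemε
  obtain ⟨x₀, hx₀⟩ := my_exists_big_dd hε hR_C2 hR_nn hR0
  -- differentiability facts
  have hM_diff : Differentiable ℝ (Ext fm) := hM_C2.differentiable (by norm_num)
  have hR_diff : Differentiable ℝ (Ext fr) := hR_C2.differentiable (by norm_num)
  have hM_ddiff : Differentiable ℝ (deriv (Ext fm)) := my_diff_deriv hM_C2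
  have hR_ddiff : Differentiable ℝ (deriv (Ext fr)) := my_diff_deriv hR_C2
  -- first derivatives of Ext fp
  have hD1 : deriv (Ext fp) = fun x => deriv (Ext fm) x + deriv (Ext fr) x
      + deriv (Ext fr) x := by
    funext x
    have hfun : Ext fp = fun y => (Ext fm y + Ext fr y) + Ext fr y := funext hpt
    rw [hfun, deriv_fun_add ((hM_diff x).fun_add (hR_diff x)) (hR_diff x),
      deriv_fun_add (hM_diff x) (hR_diff x)]
  have hD2 : deriv (deriv (Ext fp)) x₀ = deriv (deriv (Ext fm)) x₀
      + deriv (deriv (Ext fr)) x₀ + deriv (deriv (Ext fr)) x₀ := by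
    rw [hD1]
    rw [show (fun x => deriv (Ext fm) x + deriv (Ext fr) x + deriv (Ext fr) x)
        = fun x => (deriv (Ext fm) x + deriv (Ext fr) x) + deriv (Ext fr) x from rfl]
    rw [deriv_fun_add ((hM_ddiff x₀).fun_add (hR_ddiff x₀)) (hR_ddiff x₀),
      deriv_fun_add (hM_ddiff x₀) (hR_ddiff x₀)]
  -- the contradiction
  have hPb := hP_bd3 x₀
  have hMb := hM_bd3 x₀
  rw [hD2] at hPb
  have hPb' := abs_le.mp hPb
  have hMb' := abs_le.mp hMb
  have hdd_le : deriv (deriv (Ext fr)) x₀ ≤ 3 * C := by linarith [hPb'.2, hMb'.1]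
  have hkey : Real.sin ε / ε ^ 2 ≤ 3 * C := by
    rw [hRε] at hx₀; linarith
  have hεsq : (0:ℝ) < ε ^ 2 := by positivity
  have hkey2 : Real.sin ε ≤ 3 * C * ε ^ 2 := by
    have := (div_le_iff₀ hεsq).mp hkey
    linarith
  have hsin_lb : 3 / 4 * ε < Real.sin ε := by
    have h1 := Real.sin_gt_sub_cube hε
    have h2 : ε ^ 3 ≤ ε := by nlinarith
    linarith
  have hsmall : 3 * C * ε ^ 2 ≤ ε / 4 := by
    have h1 : ε * ε ≤ (1 / (12 * C)) * ε := by nlinarith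
    have h2 : 3 * C * (ε * ε) ≤ 3 * C * ((1 / (12 * C)) * ε) := by nlinarith
    have h3 : 3 * C * ((1 / (12 * C)) * ε) = ε / 4 := by field_simp; ring
    nlinarith [sq_nonneg ε]
  nlinarith

end
end
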